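/- arXiv:2601.05247 — 3 statements merged into one kernel-verified Lean document; each statement's English description precedes it below -/
import Mathlib

section
/- Let n ≥ 1 and let π, π' be permutations of {1,…,n}. Let π_cyc be the cyclic permutation 1↦2↦⋯↦n↦1. Then π' ≠ π if and only if there exist integers j, k with 0 ≤ j < k < n and a permutation ρ of {1,…,n} fixing n (i.e., ρ(n) = n) such that π' = π_cyc^{-j} ∘ ρ ∘ π_cyc^{k} ∘ π. -/
open Fin.NatCast Fin.CommRing

lemma rot_pow_apply (m k : ℕ) (i : Fin (m + 1)) :
    ((finRotate (m + 1)) ^ k) i = i + (k : Fin (m + 1)) := by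
  induction k with
  | zero => simp
  | succ k ih =>
    rw [pow_succ', Equiv.Perm.mul_apply, ih, finRotate_succ_apply]
    push_cast
    ring

/-- Lemma 7.2: π' ≠ π iff π' = π_cyc^{-j} ∘ ρ ∘ π_cyc^k ∘ π for some 0 ≤ j < k < n
and ρ fixing the last element. -/
theorem perm_decomposition (n : ℕ) (hn : 1 ≤ n) (π π' : Equiv.Perm (Fin n)) :
    π' ≠ π ↔ ∃ j k : ℕ, j < k ∧ k < n ∧
      ∃ ρ : Equiv.Perm (Fin n), ρ ⟨n - 1, by omega⟩ = ⟨n - 1, by omega⟩ ∧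
        π' = ((finRotate n) ^ j)⁻¹ * ρ * (finRotate n) ^ k * π := by
  obtain ⟨m, rfl⟩ : ∃ m, n = m + 1 := ⟨n - 1, by omega⟩
  constructor
  · intro hne
    set σ : Equiv.Perm (Fin (m + 1)) := π' * π⁻¹ with hσ
    have hσne : σ ≠ 1 := by
      intro h
      apply hne
      have := congrArg (· * π) h
      simpa [hσ, mul_assoc] using this
    -- there is a moved point
    have hex : ∃ x : Fin (m + 1), σ x ≠ x := by
      by_contra h
      push_neg at h
      exact hσne (Equiv.ext h)
    -- take minimal moved point
    obtain ⟨x, hx, hmin⟩ := Finset.exists_min_image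
      (Finset.univ.filter (fun y => σ y ≠ y)) id
      ⟨hex.choose, by simpa using hex.choose_spec⟩
    simp only [Finset.mem_filter, Finset.mem_univ, true_and] at hx
    have hmin' : ∀ y : Fin (m + 1), y < x → σ y = y := by
      intro y hy
      by_contra h
      have := hmin y (by simp [h])
      simp only [id] at this
      omega
    have hlt : x < σ x := by
      rcases lt_trichotomy x (σ x) with h | h | h
      · exact h
      · exact absurd h.symm hx
      · have := hmin' (σ x) h
        exact absurd (σ.injective this) hx
    have hvx : (σ x).val ≤ m := Nat.lt_succ_iff.mp (σ x).isLt
    refine ⟨m - (σ x).val, m - x.val, by omega, by omega,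
      (finRotate (m + 1)) ^ (m - (σ x).val) * σ * ((finRotate (m + 1)) ^ (m - x.val))⁻¹,
      ?_, ?_⟩
    · have hxk : ((finRotate (m + 1)) ^ (m - x.val)) x = ⟨m + 1 - 1, by omega⟩ := by
        rw [rot_pow_apply]
        apply Fin.ext
        simp only [Fin.add_def, Fin.val_natCast]
        rw [Nat.mod_eq_of_lt (show m - x.val < m + 1 by omega),
          Nat.mod_eq_of_lt (show x.val + (m - x.val) < m + 1 by omega)]
        omega
      have hxk' : ((finRotate (m + 1)) ^ (m - x.val))⁻¹ ⟨m + 1 - 1, by omega⟩ = x := by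
        rw [← hxk]; exact Equiv.symm_apply_apply _ x
      simp only [Equiv.Perm.mul_apply, hxk', rot_pow_apply]
      apply Fin.ext
      simp only [Fin.add_def, Fin.val_natCast]
      rw [Nat.mod_eq_of_lt (show m - (σ x).val < m + 1 by omega),
        Nat.mod_eq_of_lt (show (σ x).val + (m - (σ x).val) < m + 1 by omega)]
      omega
    · rw [hσ]; group
  · rintro ⟨j, k, hjk, hk, ρ, hρ, heq⟩
    intro hcontra
    rw [hcontra] at heq
    have h0 : (1 : Equiv.Perm (Fin (m+1))) * π
        = (((finRotate (m+1)) ^ j)⁻¹ * ρ * (finRotate (m+1)) ^ k) * π := by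
      simpa using heq
    have h0' := mul_right_cancel h0
    have h1 : ρ = (finRotate (m + 1)) ^ j * ((finRotate (m + 1)) ^ k)⁻¹ := by
      calc ρ = (finRotate (m+1)) ^ j * (((finRotate (m+1)) ^ j)⁻¹ * ρ * (finRotate (m+1)) ^ k)
                * ((finRotate (m+1)) ^ k)⁻¹ := by group
        _ = (finRotate (m+1)) ^ j * 1 * ((finRotate (m+1)) ^ k)⁻¹ := by rw [← h0']
        _ = (finRotate (m+1)) ^ j * ((finRotate (m+1)) ^ k)⁻¹ := by group
    set e : Fin (m + 1) := ⟨m + 1 - 1, by omega⟩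
    set x : Fin (m + 1) := ((finRotate (m + 1)) ^ k)⁻¹ e with hxdef
    have hk1 : ((finRotate (m + 1)) ^ k) x = e := Equiv.apply_symm_apply _ e
    have hj1 : ((finRotate (m + 1)) ^ j) x = e := by
      have := hρ
      rw [h1] at this
      simpa [Equiv.Perm.mul_apply, ← hxdef] using this
    rw [rot_pow_apply] at hk1 hj1
    have : (j : Fin (m + 1)) = (k : Fin (m + 1)) := by
      have := hj1.trans hk1.symm
      exact add_left_cancel this
    have hv := congrArg Fin.val this
    simp only [Fin.val_natCast] at hv
    rw [Nat.mod_eq_of_lt (by omega), Nat.mod_eq_of_lt (by omega)] at hv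
    omega
end

section
/- Let w ≥ 5 be an integer and suppose the signature consists of a single relation symbol of arity w, so that the number of k-types is |τ_k| = 2^{k^w}. Then ∏_{i=0}^{w−1} (2^{(i+1)^w})^{C(w−1,i)} ≥ (2^{w^w})^{2^{w/10}·(w+1)^{−2}}. -/
open Finset

lemma pow_le_choose_aux (m : ℕ) : ∀ (k n : ℕ), (m + 1) * k ≤ n → m ^ k ≤ n.choose k := by
  intro k
  induction k with
  | zero => intro n _; simp
  | succ k ih =>
    intro n h
    have hexp : (m + 1) * (k + 1) = (m + 1) * k + (m + 1) := by ring
    have h1 : m ^ k ≤ n.choose k := ih n (by omega)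
    have h2 : m * (k + 1) ≤ n - k := by
      have h' : (m + 1) * (k + 1) = m * (k + 1) + (k + 1) := by ring
      omega
    have h3 := Nat.choose_succ_right_eq n k
    have key : m ^ (k + 1) * (k + 1) ≤ n.choose (k + 1) * (k + 1) := by
      rw [h3]
      calc m ^ (k + 1) * (k + 1) = m ^ k * (m * (k + 1)) := by ring
        _ ≤ n.choose k * (n - k) := Nat.mul_le_mul h1 h2
    exact Nat.le_of_mul_le_mul_right key (by omega)

/-- For w ≥ 5 and a single relation symbol of arity w (so |τ_k| = 2^{k^w}):
∏_{i=0}^{w−1} (2^{(i+1)^w})^{C(w−1,i)} ≥ (2^{w^w})^{2^{w/10}·(w+1)^{−2}}. -/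
theorem prod_types_ge (w : ℕ) (hw : 5 ≤ w) :
    ∏ i ∈ range w, ((2 : ℝ) ^ ((i + 1) ^ w)) ^ ((w - 1).choose i) ≥
      ((2 : ℝ) ^ (w ^ w)) ^
        ((2 : ℝ) ^ ((w : ℝ) / 10) * ((w : ℝ) + 1) ^ (-2 : ℝ)) := by
  obtain ⟨t, ht⟩ : ∃ t, t = w / 10 := ⟨_, rfl⟩
  have h10t : 10 * t ≤ w := by omega
  have hwt9 : w ≤ 10 * t + 9 := by omega
  have htw1 : t ≤ w - 1 := by omega
  have h9t : 9 * t ≤ w - 1 := by omega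
  have htlew : t ≤ w := by omega
  have hw0 : (0:ℝ) < w := by
    have : (5:ℝ) ≤ (w:ℝ) := by exact_mod_cast hw
    linarith
  have hw5 : (5:ℝ) ≤ (w:ℝ) := by exact_mod_cast hw
  have htw0 : (0:ℝ) ≤ (w:ℝ) - t := by
    have : (t:ℝ) ≤ (w:ℝ) := by exact_mod_cast htlew
    linarith
  -- LHS as a single power of 2
  have hL : ∏ i ∈ range w, ((2:ℝ) ^ ((i + 1) ^ w)) ^ ((w - 1).choose i)
      = (2:ℝ) ^ (∑ i ∈ range w, (i + 1) ^ w * (w - 1).choose i) := by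
    rw [← Finset.prod_pow_eq_pow_sum]
    exact Finset.prod_congr rfl fun i _ => (pow_mul 2 _ _).symm
  set S := ∑ i ∈ range w, (i + 1) ^ w * (w - 1).choose i with hS
  -- the single term bound
  have hterm : (w - t) ^ w * (w - 1).choose t ≤ S := by
    have hmem : w - 1 - t ∈ range w := by simp; omega
    have this : (w - 1 - t + 1) ^ w * (w - 1).choose (w - 1 - t) ≤ S :=
      Finset.single_le_sum (f := fun i => (i + 1) ^ w * (w - 1).choose i)
        (fun i _ => Nat.zero_le _) hmem
    have he1 : w - 1 - t + 1 = w - t := by omega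
    have he2 : (w - 1).choose (w - 1 - t) = (w - 1).choose t := Nat.choose_symm htw1
    rwa [he1, he2] at this
  have hchoose : 8 ^ t ≤ (w - 1).choose t := pow_le_choose_aux 8 t (w - 1) (by omega)
  -- analytic bound : exp(-10t/(9w)) ≤ 1 - t/w
  have hA : Real.exp (-(10 * (t:ℝ) / (9 * (w:ℝ)))) ≤ 1 - (t:ℝ) / (w:ℝ) := by
    set y := 10 * (t:ℝ) / (9 * (w:ℝ)) with hy
    have hy1 : 0 ≤ y := by positivity
    have h10tr : (10:ℝ) * t ≤ (w:ℝ) := by exact_mod_cast h10t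
    have hy2 : y ≤ 1 / 9 := by
      rw [hy, div_le_div_iff₀ (by positivity) (by norm_num)]
      linarith
    have he : 1 + y ≤ Real.exp y := by have := Real.add_one_le_exp y; linarith
    have h1y : (0:ℝ) < 1 + y := by linarith
    have k1 : (Real.exp y)⁻¹ ≤ (1 + y)⁻¹ := inv_anti₀ h1y he
    have k2 : (1 + y)⁻¹ ≤ 1 - (9 / 10) * y := by
      rw [inv_eq_one_div, div_le_iff₀ h1y]
      nlinarith
    have htwy : (t:ℝ) / (w:ℝ) = (9 / 10) * y := by
      rw [hy]; field_simp
    rw [Real.exp_neg, htwy]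
    linarith
  -- power bound : w^w * exp(-10t/9) ≤ (w - t)^w
  have hB : (w:ℝ) ^ w * Real.exp (-(10 * (t:ℝ) / 9)) ≤ ((w:ℝ) - t) ^ w := by
    have hstep : (w:ℝ) * Real.exp (-(10 * (t:ℝ) / (9 * (w:ℝ)))) ≤ (w:ℝ) - t := by
      calc (w:ℝ) * Real.exp (-(10 * (t:ℝ) / (9 * (w:ℝ))))
          ≤ (w:ℝ) * (1 - (t:ℝ) / (w:ℝ)) := by
            exact mul_le_mul_of_nonneg_left hA (le_of_lt hw0)
        _ = (w:ℝ) - t := by field_simp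
    have hpow := pow_le_pow_left₀ (by positivity) hstep w
    calc (w:ℝ) ^ w * Real.exp (-(10 * (t:ℝ) / 9))
        = ((w:ℝ) * Real.exp (-(10 * (t:ℝ) / (9 * (w:ℝ))))) ^ w := by
          rw [mul_pow, ← Real.exp_nat_mul]
          congr 2
          field_simp
      _ ≤ ((w:ℝ) - t) ^ w := hpow
  -- numeric bound
  have c3 : Real.exp (10 * (t:ℝ) / 9) ≤ (4:ℝ) ^ t := by
    have heq : Real.exp (10 * (t:ℝ) / 9) = (Real.exp (10 / 9)) ^ t := by
      rw [← Real.exp_nat_mul]; congr 1; ring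
    rw [heq]
    apply pow_le_pow_left₀ (le_of_lt (Real.exp_pos _))
    have h2 : (0.6931471803:ℝ) < Real.log 2 := Real.log_two_gt_d9
    have hlog4 : Real.log 4 = 2 * Real.log 2 := by
      rw [show (4:ℝ) = 2 ^ 2 by norm_num, Real.log_pow]; push_cast; ring
    calc Real.exp (10 / 9) ≤ Real.exp (Real.log 4) := by
          apply Real.exp_le_exp.mpr; rw [hlog4]; linarith
      _ = 4 := Real.exp_log (by norm_num)
  have hE : (2:ℝ) ^ t ≤ Real.exp (-(10 * (t:ℝ) / 9)) * 8 ^ t := by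
    have h8 : (8:ℝ) ^ t = 4 ^ t * 2 ^ t := by rw [← mul_pow]; norm_num
    rw [Real.exp_neg, h8]
    have hinv : ((4:ℝ) ^ t)⁻¹ ≤ (Real.exp (10 * (t:ℝ) / 9))⁻¹ :=
      inv_anti₀ (Real.exp_pos _) c3
    calc (2:ℝ) ^ t = ((4:ℝ) ^ t)⁻¹ * (4 ^ t * 2 ^ t) := by
          field_simp
      _ ≤ (Real.exp (10 * (t:ℝ) / 9))⁻¹ * (4 ^ t * 2 ^ t) :=
          mul_le_mul_of_nonneg_right hinv (by positivity)
  have c1 : (2:ℝ) ^ ((w:ℝ) / 10) ≤ 2 * 2 ^ t := by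
    have : (2:ℝ) ^ ((w:ℝ) / 10) ≤ (2:ℝ) ^ ((t:ℝ) + 1) := by
      apply (Real.rpow_le_rpow_left_iff one_lt_two).mpr
      rw [div_le_iff₀ (by norm_num : (0:ℝ) < 10)]
      have : (w:ℝ) ≤ 10 * t + 9 := by exact_mod_cast hwt9
      linarith
    calc (2:ℝ) ^ ((w:ℝ) / 10) ≤ (2:ℝ) ^ ((t:ℝ) + 1) := this
      _ = 2 * 2 ^ t := by
          rw [Real.rpow_add two_pos, Real.rpow_one, Real.rpow_natCast]; ring
  have c2 : ((w:ℝ) + 1) ^ (-2:ℝ) ≤ 1 / 36 := by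
    have heq : ((w:ℝ) + 1) ^ (-2:ℝ) = (((w:ℝ) + 1) * ((w:ℝ) + 1))⁻¹ := by
      rw [show (-2:ℝ) = ((-2 : ℤ) : ℝ) by norm_num, Real.rpow_intCast,
        show (-2:ℤ) = -(2:ℤ) from rfl, zpow_neg, zpow_two]
    rw [heq]
    have h36 : (36:ℝ) ≤ ((w:ℝ) + 1) * ((w:ℝ) + 1) := by nlinarith
    have := inv_anti₀ (by norm_num : (0:ℝ) < 36) h36
    simpa using this
  have hC : (2:ℝ) ^ ((w:ℝ) / 10) * ((w:ℝ) + 1) ^ (-2:ℝ)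
      ≤ Real.exp (-(10 * (t:ℝ) / 9)) * 8 ^ t := by
    have hpos : (0:ℝ) < (2:ℝ) ^ t := by positivity
    have step1 : (2:ℝ) ^ ((w:ℝ) / 10) * ((w:ℝ) + 1) ^ (-2:ℝ) ≤ (2 * 2 ^ t) * (1 / 36) := by
      apply mul_le_mul c1 c2 (by positivity) (by positivity)
    calc (2:ℝ) ^ ((w:ℝ) / 10) * ((w:ℝ) + 1) ^ (-2:ℝ)
        ≤ (2 * 2 ^ t) * (1 / 36) := step1
      _ ≤ (2:ℝ) ^ t := by nlinarith
      _ ≤ Real.exp (-(10 * (t:ℝ) / 9)) * 8 ^ t := hE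
  -- assemble
  rw [ge_iff_le, hL, ← Real.rpow_natCast (2:ℝ) (w ^ w), ← Real.rpow_natCast (2:ℝ) S,
    ← Real.rpow_mul (by norm_num : (0:ℝ) ≤ 2)]
  apply (Real.rpow_le_rpow_left_iff one_lt_two).mpr
  have hcast : ((w - t : ℕ) : ℝ) = (w:ℝ) - t := by
    rw [Nat.cast_sub htlew]
  calc ((w ^ w : ℕ) : ℝ) * ((2:ℝ) ^ ((w:ℝ) / 10) * ((w:ℝ) + 1) ^ (-2:ℝ))
      ≤ ((w ^ w : ℕ) : ℝ) * (Real.exp (-(10 * (t:ℝ) / 9)) * 8 ^ t) := by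
        apply mul_le_mul_of_nonneg_left hC (by positivity)
    _ = ((w:ℝ) ^ w * Real.exp (-(10 * (t:ℝ) / 9))) * 8 ^ t := by
        push_cast; ring
    _ ≤ ((w:ℝ) - t) ^ w * 8 ^ t := by
        apply mul_le_mul_of_nonneg_right hB (by positivity)
    _ ≤ ((w:ℝ) - t) ^ w * ((w - 1).choose t : ℝ) := by
        apply mul_le_mul_of_nonneg_left _ (pow_nonneg htw0 w)
        exact_mod_cast hchoose
    _ = (((w - t) ^ w * (w - 1).choose t : ℕ) : ℝ) := by
        push_cast [hcast]
        ring
    _ ≤ (S : ℝ) := by exact_mod_cast hterm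
end

section
/- Let t ≥ 2, and let w, c, R, ar, T_k be as follows: R a nonempty finite set with arities ar : R → {1,…,w}, c ≥ 0 constants, T_k = ∏_{r∈R} 2^{(k+c)^{ar(r)}}, and suppose w + c ≥ t. Set ε_t = 1/e − ((t−1)/t)^t. Then T_{w−1} ≥ T_w^{1/e − ε_t}. -/
open Finset

private lemma step_mono (n : ℕ) (hn : 2 ≤ n) :
    (((n : ℝ) - 1) / n) ^ n ≤ ((n : ℝ) / ((n : ℝ) + 1)) ^ (n + 1) := by
  have hN : (2 : ℝ) ≤ (n : ℝ) := by exact_mod_cast hn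
  set N := (n : ℝ) with hNdef
  have hN0 : 0 < N := by linarith
  have hd : 0 < N ^ 2 - 1 := by nlinarith
  have h1 : 1 + (n : ℝ) * (1 / (N ^ 2 - 1)) ≤ (1 + 1 / (N ^ 2 - 1)) ^ n :=
    one_add_mul_le_pow (le_trans (by norm_num : (-2:ℝ) ≤ 0) (by positivity)) n
  have h2 : (N + 1) / N ≤ 1 + N * (1 / (N ^ 2 - 1)) := by
    rw [mul_one_div, div_le_iff₀ hN0, add_mul, one_mul, div_mul_eq_mul_div,
      ← sub_le_iff_le_add', le_div_iff₀ hd]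
    nlinarith
  have h3 : (1 : ℝ) + 1 / (N ^ 2 - 1) = N ^ 2 / (N ^ 2 - 1) := by field_simp; ring
  have key : (N + 1) / N ≤ (N ^ 2 / (N ^ 2 - 1)) ^ n := by
    rw [← h3]; exact h2.trans h1
  have hpos : 0 < (N + 1) / N := by positivity
  have h4 : ((N ^ 2 - 1) / N ^ 2) ^ n ≤ N / (N + 1) := by
    have e1 : ((N ^ 2 - 1) / N ^ 2) ^ n = ((N ^ 2 / (N ^ 2 - 1)) ^ n)⁻¹ := by
      rw [← inv_pow, inv_div]
    have e2 : N / (N + 1) = ((N + 1) / N)⁻¹ := by rw [inv_div]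
    rw [e1, e2]
    exact inv_anti₀ hpos key
  have heq : (N - 1) / N = ((N ^ 2 - 1) / N ^ 2) * (N / (N + 1)) := by
    field_simp; ring
  calc ((N - 1) / N) ^ n = ((N ^ 2 - 1) / N ^ 2) ^ n * (N / (N + 1)) ^ n := by
        rw [heq, mul_pow]
    _ ≤ (N / (N + 1)) * (N / (N + 1)) ^ n :=
        mul_le_mul_of_nonneg_right h4 (by positivity)
    _ = (N / (N + 1)) ^ (n + 1) := by ring

private lemma seq_mono (t m : ℕ) (ht : 2 ≤ t) (htm : t ≤ m) :
    (((t : ℝ) - 1) / t) ^ t ≤ (((m : ℝ) - 1) / m) ^ m := by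
  induction m, htm using Nat.le_induction with
  | base => exact le_rfl
  | succ n hn ih =>
    refine ih.trans ?_
    have h := step_mono n (ht.trans hn)
    push_cast
    convert h using 2
    · rfl
    · push_cast; ring

/-- T_{w−1} ≥ T_w^{1/e − ε_t}, where T_k = ∏_{r∈R} 2^{(k+c)^{ar(r)}} and
ε_t = 1/e − ((t−1)/t)^t, provided w + c ≥ t ≥ 2. -/
theorem ratio_types (t : ℕ) (ht : 2 ≤ t) (w c : ℕ) (hw : 1 ≤ w)
    (R : Type*) [Fintype R] [Nonempty R] (ar : R → ℕ)
    (har : ∀ r, 1 ≤ ar r ∧ ar r ≤ w) (hwc : t ≤ w + c) :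
    (∏ r : R, (2 : ℝ) ^ ((w - 1 + c) ^ (ar r))) ≥
      (∏ r : R, (2 : ℝ) ^ ((w + c) ^ (ar r))) ^
        (1 / Real.exp 1 - (1 / Real.exp 1 - (((t : ℝ) - 1) / t) ^ t)) := by
  have hα : 1 / Real.exp 1 - (1 / Real.exp 1 - (((t : ℝ) - 1) / t) ^ t)
      = (((t : ℝ) - 1) / t) ^ t := by ring
  rw [hα]
  set α : ℝ := (((t : ℝ) - 1) / t) ^ t with hαdef
  have ht0 : (0:ℝ) < t := by positivity
  have hα0 : 0 ≤ α := by
    apply pow_nonneg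
    apply div_nonneg _ ht0.le
    have : (2:ℝ) ≤ t := by exact_mod_cast ht
    linarith
  rw [Finset.prod_pow_eq_pow_sum, Finset.prod_pow_eq_pow_sum, ge_iff_le,
    ← Real.rpow_natCast 2 (∑ i : R, (w + c) ^ ar i),
    ← Real.rpow_natCast 2 (∑ i : R, (w - 1 + c) ^ ar i),
    ← Real.rpow_mul (by norm_num)]
  apply Real.rpow_le_rpow_left_iff (x := 2) (by norm_num) |>.mpr
  push_cast [Nat.cast_sub hw]
  rw [Finset.sum_mul]
  apply Finset.sum_le_sum
  intro r _
  set M : ℝ := ((w : ℝ) + c) with hM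
  have hM2 : (2:ℝ) ≤ M := by
    have : (2:ℝ) ≤ (t:ℝ) := by exact_mod_cast ht
    have h2 : (t:ℝ) ≤ (w:ℝ) + c := by exact_mod_cast hwc
    linarith
  have hM0 : (0:ℝ) < M := by linarith
  have hcast : ((w : ℝ) - 1 + c) = M - 1 := by rw [hM]; ring
  have hwr : ((↑w - 1 + ↑c : ℝ)) = M - 1 := hcast
  -- goal should be M ^ ar r * α ≤ (↑w - 1 + ↑c) ^ ar r  (after push_cast with w ≥ 1?)
  have harw := har r
  have hαle : α ≤ ((M - 1) / M) ^ (ar r) := by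
    have h1 : α ≤ ((M - 1) / M) ^ (w + c) := by
      have := seq_mono t (w + c) ht hwc
      rw [hαdef]
      convert this using 2 <;> push_cast <;> ring
    refine h1.trans ?_
    apply pow_le_pow_of_le_one
    · apply div_nonneg (by linarith) hM0.le
    · rw [div_le_one hM0]; linarith
    · exact harw.2.trans (Nat.le_add_right w c)
  have hfin : M ^ ar r * α ≤ (M - 1) ^ ar r := by
    have := mul_le_mul_of_nonneg_left hαle (a := M ^ ar r) (by positivity)
    refine this.trans_eq ?_
    rw [div_pow, mul_div_assoc']
    rw [mul_comm, mul_div_assoc]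
    rw [div_self (by positivity), mul_one]
  rw [hcast]
  exact hfin
end
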